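/- (Exact recovery corollary of Theorem 1.) Assume β_{N,M} > 0 and suppose the true state satisfies u_true = z + η for some z ∈ Z_N and η ∈ U_M ∩ Z_N^⊥ (no model bias outside the background and update spaces). Then any PBDW estimate u* with perfect data coincides with u_true: u* = u_true. -/

import Mathlib

open Submodule RealInnerProductSpace

/-- **Exact recovery corollary of Theorem 1.**
Assume the stability constant `β` is positive and the true state has no model bias
outside the background and update spaces: `utrue = z + η` with `z ∈ ZN` and
`η ∈ UM ⊓ ZNᗮ`.  Then any PBDW estimate `ustar` with perfect data coincides with
`utrue`. -/
theorem pbdw_exact_recovery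
    {U : Type*} [NormedAddCommGroup U] [InnerProductSpace ℝ U] [CompleteSpace U]
    (ZN UM : Submodule ℝ U) [FiniteDimensional ℝ ZN] [FiniteDimensional ℝ UM]
    (β : ℝ) (hβ : 0 < β)
    (hstab : ∀ z ∈ ZN, β * ‖z‖ ≤ ‖(orthogonalProjection UM z : U)‖)
    (utrue z η : U) (hz : z ∈ ZN) (hη : η ∈ UM ⊓ ZNᗮ) (htrue : utrue = z + η)
    (ustar zstar ηstar : U)
    (hzstar : zstar ∈ ZN) (hηstar : ηstar ∈ UM ⊓ ZNᗮ)
    (hsum : ustar = zstar + ηstar)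
    (hinterp : orthogonalProjection UM ustar = orthogonalProjection UM utrue) :
    ustar = utrue := by
  obtain ⟨hηU, hηZ⟩ := hη
  obtain ⟨hηsU, hηsZ⟩ := hηstar
  have hd : zstar - z ∈ ZN := ZN.sub_mem hzstar hz
  have he : η - ηstar ∈ UM := UM.sub_mem hηU hηsU
  have heZ : η - ηstar ∈ ZNᗮ := Submodule.sub_mem _ hηZ hηsZ
  set P := orthogonalProjection UM with hP
  have hPη : (P η : U) = η := starProjection_eq_self_iff.mpr hηU
  have hPηs : (P ηstar : U) = ηstar := starProjection_eq_self_iff.mpr hηsU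
  have hPe : (P (η - ηstar) : U) = η - ηstar :=
    starProjection_eq_self_iff.mpr he
  have key : (P (zstar - z) : U) = η - ηstar := by
    have h1 : P (zstar + ηstar) = P (z + η) := by rw [← hsum, ← htrue]; exact hinterp
    have h2 : (P zstar : U) + ηstar = (P z : U) + η := by
      have h3 := congrArg (fun x : UM => (x : U)) h1
      simpa [map_add, hPη, hPηs] using h3
    have h4 : (P zstar : U) - (P z : U) = η - ηstar := by
      rw [sub_eq_sub_iff_add_eq_add]
      exact h2.trans (add_comm _ _)
    simpa [map_sub] using h4
  have hinner : ⟪(P (zstar - z) : U), η - ηstar⟫ = 0 := by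
    rw [show ⟪(P (zstar - z) : U), η - ηstar⟫ = ⟪zstar - z, (P (η - ηstar) : U)⟫ from
      inner_starProjection_left_eq_right UM _ _, hPe]
    exact (Submodule.mem_orthogonal _ _).mp heZ _ hd
  have he0 : η - ηstar = 0 := by
    have : ⟪η - ηstar, η - ηstar⟫ = 0 := by nth_rewrite 1 [← key]; exact hinner
    exact inner_self_eq_zero.mp this
  have hd0 : zstar - z = 0 := by
    have h1 : β * ‖zstar - z‖ ≤ ‖(P (zstar - z) : U)‖ := hstab _ hd
    rw [key, he0, norm_zero] at h1
    have hn : ‖zstar - z‖ ≤ 0 :=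
      le_of_mul_le_mul_left (by simpa using h1) hβ
    exact norm_le_zero_iff.mp hn
  have : ηstar = η := by
    have := he0; rw [sub_eq_zero] at this; exact this.symm
  rw [hsum, htrue, this, show zstar = z from by rw [sub_eq_zero] at hd0; exact hd0]
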